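/- The ordered group (E, E₊) satisfies the Riesz interpolation property: writing e ≤ f for f − e ∈ E₊ ∪ {0}, for all a₁, a₂, b₁, b₂ ∈ E with aᵢ ≤ bⱼ for all i, j ∈ {1, 2}, there exists c ∈ E with aᵢ ≤ c ≤ bⱼ for all i, j ∈ {1, 2}. -/

import Mathlib

/-- The additive subgroup `E` of `ℝ × ℤ × ℤ`: all triples `(r, x, y)` such that
`r = (j + k√3)/5^(6i)`, `x ≡ j (mod 9)` and `y ≡ k (mod 3)` for some integers `i, j, k`. -/
def Eset : Set (ℝ × ℤ × ℤ) :=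
  {p | ∃ i j k : ℤ, p.1 = ((j : ℝ) + (k : ℝ) * Real.sqrt 3) / (5 : ℝ) ^ (6 * i) ∧
    p.2.1 ≡ j [ZMOD 9] ∧ p.2.2 ≡ k [ZMOD 3]}

/-- The positive cone `E₊ = {(r, x, y) ∈ E : r > 0} ∪ {(0, 0, 0)}`. -/
def Epos : Set (ℝ × ℤ × ℤ) :=
  {p | p ∈ Eset ∧ 0 < p.1} ∪ {0}

/-- An order automorphism of `(E, E₊)`: an additive group automorphism of `E`
(a bijection of `E` onto itself which is additive on `E`) with `φ(E₊) = E₊`. -/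
structure IsOrderAuto (φ : ℝ × ℤ × ℤ → ℝ × ℤ × ℤ) : Prop where
  bijOn : Set.BijOn φ Eset Eset
  addOn : ∀ p ∈ Eset, ∀ q ∈ Eset, φ (p + q) = φ p + φ q
  posEq : φ '' Epos = Epos


lemma pow56_mod9 (t : ℕ) : (5:ℤ)^(6*t) ≡ 1 [ZMOD 9] := by
  calc (5:ℤ)^(6*t) = ((5:ℤ)^6)^t := by rw [pow_mul]
  _ ≡ 1^t [ZMOD 9] := Int.ModEq.pow t (by decide)
  _ = 1 := one_pow t

lemma pow56_mod3 (t : ℕ) : (5:ℤ)^(6*t) ≡ 1 [ZMOD 3] := by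
  calc (5:ℤ)^(6*t) = ((5:ℤ)^6)^t := by rw [pow_mul]
  _ ≡ 1^t [ZMOD 3] := Int.ModEq.pow t (by decide)
  _ = 1 := one_pow t

lemma shift_denom (i I j k : ℤ) (h : i ≤ I) :
    ((j:ℝ) + (k:ℝ) * Real.sqrt 3) / (5:ℝ)^(6*i) =
    (((j * 5^(6*(I-i).toNat) : ℤ) : ℝ) + ((k * 5^(6*(I-i).toNat) : ℤ) : ℝ) * Real.sqrt 3) / (5:ℝ)^(6*I) := by
  have ht : ((I - i).toNat : ℤ) = I - i := Int.toNat_of_nonneg (by omega)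
  have h1 : (5:ℝ)^(6*I) = (5:ℝ)^(6*i) * (5:ℝ)^(6*(I-i).toNat : ℕ) := by
    rw [← zpow_natCast (5:ℝ) (6*(I-i).toNat), ← zpow_add₀ (by norm_num : (5:ℝ) ≠ 0)]
    congr 1
    push_cast [ht]
    ring
  have h2 : (5:ℝ)^(6*i) ≠ 0 := zpow_ne_zero _ (by norm_num)
  have h3 : ((5:ℝ)^(6*(I-i).toNat : ℕ)) ≠ 0 := pow_ne_zero _ (by norm_num)
  rw [h1]
  push_cast
  field_simp

lemma Eset_sub_mem {p q : ℝ × ℤ × ℤ} (hp : p ∈ Eset) (hq : q ∈ Eset) : p - q ∈ Eset := by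
  obtain ⟨i, j, k, hr, hx, hy⟩ := hp
  obtain ⟨i', j', k', hr', hx', hy'⟩ := hq
  set I := max i i'
  set t := (I - i).toNat
  set t' := (I - i').toNat
  refine ⟨I, j * 5^(6*t) - j' * 5^(6*t'), k * 5^(6*t) - k' * 5^(6*t'), ?_, ?_, ?_⟩
  · have e1 := shift_denom i I j k (le_max_left _ _)
    have e2 := shift_denom i' I j' k' (le_max_right _ _)
    show (p - q).1 = _
    rw [Prod.fst_sub, hr, hr', e1, e2, div_sub_div_same]
    push_cast
    ring
  · show (p - q).2.1 ≡ _ [ZMOD 9]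
    rw [Prod.snd_sub, Prod.fst_sub]
    have e1 : j * 5^(6*t) ≡ j [ZMOD 9] := by simpa using Int.ModEq.mul_left j (pow56_mod9 t)
    have e2 : j' * 5^(6*t') ≡ j' [ZMOD 9] := by simpa using Int.ModEq.mul_left j' (pow56_mod9 t')
    exact (hx.trans e1.symm).sub (hx'.trans e2.symm)
  · show (p - q).2.2 ≡ _ [ZMOD 3]
    rw [Prod.snd_sub, Prod.snd_sub]
    have e1 : k * 5^(6*t) ≡ k [ZMOD 3] := by simpa using Int.ModEq.mul_left k (pow56_mod3 t)
    have e2 : k' * 5^(6*t') ≡ k' [ZMOD 3] := by simpa using Int.ModEq.mul_left k' (pow56_mod3 t')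
    exact (hy.trans e1.symm).sub (hy'.trans e2.symm)

lemma Epos_strict {a b : ℝ × ℤ × ℤ} (h : b - a ∈ Epos) (hne : a ≠ b) : a.1 < b.1 := by
  rcases h with ⟨_, hpos⟩ | h0
  · rw [Prod.fst_sub] at hpos; linarith
  · exact absurd (sub_eq_zero.mp h0).symm hne

theorem stmt_19 (a₁ a₂ b₁ b₂ : ℝ × ℤ × ℤ)
    (ha₁ : a₁ ∈ Eset) (ha₂ : a₂ ∈ Eset) (hb₁ : b₁ ∈ Eset) (hb₂ : b₂ ∈ Eset)
    (h11 : b₁ - a₁ ∈ Epos) (h12 : b₂ - a₁ ∈ Epos)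
    (h21 : b₁ - a₂ ∈ Epos) (h22 : b₂ - a₂ ∈ Epos) :
    ∃ c ∈ Eset, (c - a₁ ∈ Epos) ∧ (c - a₂ ∈ Epos) ∧
      (b₁ - c ∈ Epos) ∧ (b₂ - c ∈ Epos) := by
  have hz : ∀ a : ℝ × ℤ × ℤ, a - a ∈ Epos := fun a => Or.inr (by simp)
  by_cases e11 : a₁ = b₁
  · exact ⟨a₁, ha₁, hz a₁, e11 ▸ h21, e11 ▸ hz a₁, h12⟩
  by_cases e12 : a₁ = b₂
  · exact ⟨a₁, ha₁, hz a₁, e12 ▸ h22, h11, e12 ▸ hz a₁⟩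
  by_cases e21 : a₂ = b₁
  · exact ⟨a₂, ha₂, by rw [e21]; exact h11, hz a₂, e21 ▸ hz a₂, h22⟩
  by_cases e22 : a₂ = b₂
  · exact ⟨a₂, ha₂, by rw [e22]; exact h12, hz a₂, h21, e22 ▸ hz a₂⟩
  have s11 := Epos_strict h11 e11
  have s12 := Epos_strict h12 e12
  have s21 := Epos_strict h21 e21
  have s22 := Epos_strict h22 e22
  set m := max a₁.1 a₂.1 with hm
  set M := min b₁.1 b₂.1 with hM
  have hmM : m < M := max_lt (lt_min s11 s12) (lt_min s21 s22)
  obtain ⟨N, hN⟩ := exists_nat_gt (1 / (M - m))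
  set P : ℝ := (5:ℝ)^(6*(N:ℤ)) with hPdef
  have hP : P = (5:ℝ)^(6*N : ℕ) := by
    have h6 : (6*(N:ℤ)) = ((6*N : ℕ) : ℤ) := by push_cast; ring
    rw [hPdef, h6, zpow_natCast]
  have hP1 : (0:ℝ) < P := by rw [hP]; positivity
  have hNP : (N:ℝ) ≤ P := by
    rw [hP]
    calc (N:ℝ) ≤ (5:ℝ)^N := by
          exact_mod_cast (Nat.lt_pow_self (a := 5) (n := N) (by norm_num)).le
      _ ≤ (5:ℝ)^(6*N) := pow_le_pow_right₀ (by norm_num) (by omega)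
  have h1MP : 1 < (M - m) * P := by
    have h2 : (1:ℝ)/(M - m) < P := hN.trans_le hNP
    have := (div_lt_iff₀ (by linarith : (0:ℝ) < M - m)).mp h2
    nlinarith
  set j : ℤ := ⌊P * m⌋ + 1 with hj
  have hjl : P * m < (j:ℝ) := by rw [hj]; push_cast; exact Int.lt_floor_add_one _
  have hju : (j:ℝ) < P * M := by
    have := Int.floor_le (P * m)
    rw [hj]; push_cast; nlinarith
  refine ⟨(((j:ℝ) + ((0:ℤ):ℝ) * Real.sqrt 3) / (5:ℝ)^(6*(N:ℤ)), j, 0),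
    ⟨(N:ℤ), j, 0, rfl, Int.ModEq.refl _, Int.ModEq.refl _⟩, ?_, ?_, ?_, ?_⟩
  all_goals
    first
    | refine Or.inl ⟨Eset_sub_mem ⟨(N:ℤ), j, 0, rfl, Int.ModEq.refl _, Int.ModEq.refl _⟩ ‹_›, ?_⟩
    | refine Or.inl ⟨Eset_sub_mem ‹_› ⟨(N:ℤ), j, 0, rfl, Int.ModEq.refl _, Int.ModEq.refl _⟩, ?_⟩
  all_goals
    rw [Prod.fst_sub]
    simp only [Int.cast_zero, zero_mul, add_zero, ← hPdef]
    rw [sub_pos]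
  · calc a₁.1 ≤ m := le_max_left _ _
      _ < (j:ℝ)/P := (lt_div_iff₀ hP1).mpr (by nlinarith)
  · calc a₂.1 ≤ m := le_max_right _ _
      _ < (j:ℝ)/P := (lt_div_iff₀ hP1).mpr (by nlinarith)
  · calc (j:ℝ)/P < M := (div_lt_iff₀ hP1).mpr (by nlinarith)
      _ ≤ b₁.1 := min_le_left _ _
  · calc (j:ℝ)/P < M := (div_lt_iff₀ hP1).mpr (by nlinarith)
      _ ≤ b₂.1 := min_le_right _ _
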